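/- Every element A of T is equivalent under the relation ≡ to a unique reduced element r(A), and r(A) can be obtained from A by a sequence of retraction moves alone. -/

import Mathlib

/-- The free magma `T` on the free monoid `F` on π₁, π₂: finite nonempty ordered
binary trees with leaves colored by elements of `F`. -/
inductive Tm : Type
  | leaf : FreeMonoid (Fin 2) → Tm
  | node : Tm → Tm → Tm

/-- The action of the generator πᵢ on `T`: it picks out the `i`-th subtree of a
node, and acts by left multiplication on (the color of) a single leaf. -/
def pact (i : Fin 2) : Tm → Tm
  | .leaf w => .leaf (FreeMonoid.of i * w)
  | .node A B => if i = 0 then A else B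

/-- The left action of a word `w ∈ F` on `T`, applying the symbols of `w` one at
a time from right to left. -/
def wact (w : FreeMonoid (Fin 2)) (A : Tm) : Tm :=
  (FreeMonoid.toList w).foldr pact A

/-- The product on `T`: `A * B` replaces each leaf of `A` of color `w` by `w • B`. -/
def tmul : Tm → Tm → Tm
  | .leaf w, B => wact w B
  | .node A₁ A₂, B => .node (tmul A₁ B) (tmul A₂ B)

/-- The identity of `T`: a single leaf colored by the empty word. -/
def tone : Tm := .leaf 1

/-- The list of leaves of a tree `A ∈ T`, in order, recorded as pairs
`(path, color)`: the path from the root to the leaf is described by the word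
`path` read from right to left, and `color` is the color of the leaf. -/
def tleaves : Tm → List (FreeMonoid (Fin 2) × FreeMonoid (Fin 2))
  | .leaf w => [(1, w)]
  | .node A B =>
      ((tleaves A).map fun pc => (pc.1 * FreeMonoid.of 0, pc.2)) ++
        ((tleaves B).map fun pc => (pc.1 * FreeMonoid.of 1, pc.2))

/-- One expansion move on `T`: some leaf of color `w` is replaced by the
two-leaf tree with colors `π₁ w`, `π₂ w` in order. -/
inductive Exp : Tm → Tm → Prop
  | expand (w : FreeMonoid (Fin 2)) :
      Exp (.leaf w) (.node (.leaf (FreeMonoid.of 0 * w)) (.leaf (FreeMonoid.of 1 * w)))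
  | left {A A' : Tm} (B : Tm) : Exp A A' → Exp (.node A B) (.node A' B)
  | right (A : Tm) {B B' : Tm} : Exp B B' → Exp (.node A B) (.node A B')

/-- The equivalence relation `≡` on `T` generated by expansion moves. -/
def TEquiv : Tm → Tm → Prop := Relation.EqvGen Exp

/-- `A` is reduced if no retraction move applies to it, i.e. it is not the
result of an expansion move. -/
def TReduced (A : Tm) : Prop := ∀ B : Tm, ¬ Exp B A

-- auxiliary development
open FreeMonoid in
/-- Combine two reduced trees at a node, performing a retraction at the root
if possible. -/
def combine (A B : Tm) : Tm :=
  match A, B with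
  | .leaf a, .leaf b =>
    match FreeMonoid.toList a, FreeMonoid.toList b with
    | x :: w, y :: w' =>
      if x = 0 ∧ y = 1 ∧ w = w' then .leaf (FreeMonoid.ofList w) else .node A B
    | _, _ => .node A B
  | _, _ => .node A B

lemma combine_cases (A B : Tm) :
    (∃ w : FreeMonoid (Fin 2), A = .leaf (FreeMonoid.of 0 * w) ∧
        B = .leaf (FreeMonoid.of 1 * w) ∧ combine A B = .leaf w) ∨
    (combine A B = .node A B ∧ ∀ w : FreeMonoid (Fin 2),
        ¬(A = .leaf (FreeMonoid.of 0 * w) ∧ B = .leaf (FreeMonoid.of 1 * w))) := by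
  have key : ∀ (a w : FreeMonoid (Fin 2)) (x : Fin 2),
      Tm.leaf a = Tm.leaf (FreeMonoid.of x * w) ↔ FreeMonoid.toList a = x :: FreeMonoid.toList w := by
    intro a w x
    constructor
    · rintro h; cases h; rfl
    · intro h
      have : a = FreeMonoid.of x * w := FreeMonoid.toList.injective (by rw [h, FreeMonoid.toList_of_mul])
      rw [this]
  match A, B with
  | .node A₁ A₂, B =>
    right
    refine ⟨rfl, by rintro w ⟨h, -⟩; exact Tm.noConfusion h⟩
  | .leaf a, .node B₁ B₂ =>
    right
    refine ⟨rfl, by rintro w ⟨-, h⟩; exact Tm.noConfusion h⟩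
  | .leaf a, .leaf b =>
    rcases h1 : FreeMonoid.toList a with _ | ⟨x, l⟩
    · right
      refine ⟨?_, ?_⟩
      · show (match FreeMonoid.toList a, FreeMonoid.toList b with
          | x :: w, y :: w' =>
            if x = 0 ∧ y = 1 ∧ w = w' then Tm.leaf (FreeMonoid.ofList w)
            else Tm.node (.leaf a) (.leaf b)
          | _, _ => Tm.node (.leaf a) (.leaf b)) = _
        rw [h1]
      · rintro w ⟨h, -⟩
        rw [key] at h
        rw [h1] at h
        cases h
    · rcases h2 : FreeMonoid.toList b with _ | ⟨y, l'⟩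
      · right
        refine ⟨?_, ?_⟩
        · show (match FreeMonoid.toList a, FreeMonoid.toList b with
            | x :: w, y :: w' =>
              if x = 0 ∧ y = 1 ∧ w = w' then Tm.leaf (FreeMonoid.ofList w)
              else Tm.node (.leaf a) (.leaf b)
            | _, _ => Tm.node (.leaf a) (.leaf b)) = _
          rw [h1, h2]
        · rintro w ⟨-, h⟩
          rw [key] at h
          rw [h2] at h
          cases h
      · have hc : combine (.leaf a) (.leaf b) =
            if x = 0 ∧ y = 1 ∧ l = l' then Tm.leaf (FreeMonoid.ofList l)
            else Tm.node (.leaf a) (.leaf b) := by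
          show (match FreeMonoid.toList a, FreeMonoid.toList b with
            | x :: w, y :: w' =>
              if x = 0 ∧ y = 1 ∧ w = w' then Tm.leaf (FreeMonoid.ofList w)
              else Tm.node (.leaf a) (.leaf b)
            | _, _ => Tm.node (.leaf a) (.leaf b)) = _
          rw [h1, h2]
        by_cases hcond : x = 0 ∧ y = 1 ∧ l = l'
        · left
          obtain ⟨rfl, rfl, rfl⟩ := hcond
          refine ⟨FreeMonoid.ofList l, ?_, ?_, by rw [hc, if_pos ⟨rfl, rfl, rfl⟩]⟩
          · rw [key, h1, FreeMonoid.toList_ofList]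
          · rw [key, h2, FreeMonoid.toList_ofList]
        · right
          refine ⟨by rw [hc, if_neg hcond], ?_⟩
          rintro w ⟨ha, hb⟩
          rw [key, h1] at ha
          rw [key, h2] at hb
          injection ha with hax hal
          injection hb with hby hbl
          exact hcond ⟨hax, hby, hal.trans hbl.symm⟩

def reduce : Tm → Tm
  | .leaf w => .leaf w
  | .node A B => combine (reduce A) (reduce B)

/-- structural reducedness -/
def SRed : Tm → Prop
  | .leaf _ => True
  | .node A B => SRed A ∧ SRed B ∧ ∀ w : FreeMonoid (Fin 2),
      ¬(A = .leaf (FreeMonoid.of 0 * w) ∧ B = .leaf (FreeMonoid.of 1 * w))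

lemma exp_not_sred {B A : Tm} (h : Exp B A) : ¬ SRed A := by
  induction h with
  | expand w => intro hs; exact (hs.2.2 w) ⟨rfl, rfl⟩
  | left B h ih => intro hs; exact ih hs.1
  | right A h ih => intro hs; exact ih hs.2.1

lemma sred_of_treduced {A : Tm} (h : TReduced A) : SRed A := by
  induction A with
  | leaf w => trivial
  | node A B ihA ihB =>
    refine ⟨ihA fun C hC => h _ (Exp.left B hC),
      ihB fun C hC => h _ (Exp.right A hC), ?_⟩
    rintro w ⟨rfl, rfl⟩
    exact h _ (Exp.expand w)

lemma treduced_of_sred {A : Tm} (h : SRed A) : TReduced A :=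
  fun B hB => exp_not_sred hB h

lemma sred_reduce (A : Tm) : SRed (reduce A) := by
  induction A with
  | leaf w => trivial
  | node A B ihA ihB =>
    show SRed (combine (reduce A) (reduce B))
    rcases combine_cases (reduce A) (reduce B) with ⟨w, _, _, hc⟩ | ⟨hc, hn⟩
    · rw [hc]; trivial
    · rw [hc]; exact ⟨ihA, ihB, hn⟩

lemma rtg_left {A A' : Tm} (B : Tm)
    (h : Relation.ReflTransGen (fun X Y => Exp Y X) A A') :
    Relation.ReflTransGen (fun X Y => Exp Y X) (.node A B) (.node A' B) := by
  induction h with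
  | refl => exact .refl
  | tail _ h ih => exact ih.tail (Exp.left B h)

lemma rtg_right (A : Tm) {B B' : Tm}
    (h : Relation.ReflTransGen (fun X Y => Exp Y X) B B') :
    Relation.ReflTransGen (fun X Y => Exp Y X) (.node A B) (.node A B') := by
  induction h with
  | refl => exact .refl
  | tail _ h ih => exact ih.tail (Exp.right A h)

lemma rtg_reduce (A : Tm) :
    Relation.ReflTransGen (fun X Y => Exp Y X) A (reduce A) := by
  induction A with
  | leaf w => exact .refl
  | node A B ihA ihB =>
    have h1 : Relation.ReflTransGen (fun X Y => Exp Y X) (.node A B)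
        (.node (reduce A) (reduce B)) := (rtg_left B ihA).trans (rtg_right _ ihB)
    rcases combine_cases (reduce A) (reduce B) with ⟨w, h0, h1', hc⟩ | ⟨hc, _⟩
    · show Relation.ReflTransGen _ _ (combine (reduce A) (reduce B))
      rw [hc]
      exact h1.tail (by rw [h0, h1']; exact Exp.expand w)
    · show Relation.ReflTransGen _ _ (combine (reduce A) (reduce B))
      rw [hc]; exact h1

lemma reduce_fix {A : Tm} (h : SRed A) : reduce A = A := by
  induction A with
  | leaf w => rfl
  | node A B ihA ihB =>
    show combine (reduce A) (reduce B) = _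
    rw [ihA h.1, ihB h.2.1]
    rcases combine_cases A B with ⟨w, h0, h1, _⟩ | ⟨hc, _⟩
    · exact absurd ⟨h0, h1⟩ (h.2.2 w)
    · exact hc

lemma reduce_eq_of_exp {A B : Tm} (h : Exp A B) : reduce A = reduce B := by
  induction h with
  | expand w =>
    show Tm.leaf w = combine (.leaf (FreeMonoid.of 0 * w)) (.leaf (FreeMonoid.of 1 * w))
    rcases combine_cases (Tm.leaf (FreeMonoid.of 0 * w)) (.leaf (FreeMonoid.of 1 * w)) with
      ⟨w', h0, h1, hc⟩ | ⟨_, hn⟩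
    · rw [hc]
      injection h0 with h0
      have : w = w' := by
        have := congrArg FreeMonoid.toList h0
        simpa using this
      rw [this]
    · exact absurd ⟨rfl, rfl⟩ (hn w)
  | left B h ih => show combine _ _ = combine _ _; rw [ih]
  | right A h ih => show combine _ _ = combine _ _; rw [ih]

lemma reduce_eq_of_tequiv {A B : Tm} (h : TEquiv A B) : reduce A = reduce B := by
  induction h with
  | rel _ _ h => exact reduce_eq_of_exp h
  | refl _ => rfl
  | symm _ _ _ ih => exact ih.symm
  | trans _ _ _ _ _ ih1 ih2 => exact ih1.trans ih2

/-- Every `A ∈ T` is `≡`-equivalent to a unique reduced element `R`, and `R`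
may be obtained from `A` through a chain of retraction moves alone. -/
theorem texists_unique_reduced (A : Tm) :
    ∃ R : Tm, TReduced R ∧ Relation.ReflTransGen (fun X Y => Exp Y X) A R ∧
      ∀ R' : Tm, TReduced R' → TEquiv A R' → R' = R := by
  refine ⟨reduce A, treduced_of_sred (sred_reduce A), rtg_reduce A, ?_⟩
  intro R' hR' hE
  have := reduce_eq_of_tequiv hE
  rw [reduce_fix (sred_of_treduced hR')] at this
  exact this.symm
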